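/- In the Cournot oligopoly with n identical carriers and linear inverse demand c(z) = b − B − 2(A−a)z (on the relevant range), the systemic efficiency ratio θ = (c(z_n) − c̃)·z_n / (Λ(c̃) − Λ(c(z_n))) at the Nash equilibrium total volume z_n = n(b−B−c̃)/(2(n+1)(A−a)) equals 2n/(2n+1); in particular θ → 1 as n → ∞. -/

import Mathlib

/-- Systemic efficiency ratio `θ = 2n/(2n+1)` in the Cournot oligopoly, and `θ → 1`. -/
theorem stmt_7 (a A b B ctil : ℝ)
    (ha : a < 0) (hA : 0 < A) (hb : 0 < b) (hB : 0 < B) (hc : 0 < ctil)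
    (hpos : 0 < b - B - ctil)
    (z : ℝ → ℝ) (hz : ∀ c, z c = max (b - B - c) 0 / (2 * (A - a)))
    (cinv : ℝ → ℝ) (hcinv : ∀ v, cinv v = b - B - 2 * (A - a) * v)
    (zn : ℕ → ℝ)
    (hzn : ∀ n, zn n = (n : ℝ) * (b - B - ctil) / (2 * ((n : ℝ) + 1) * (A - a))) :
    (∀ n : ℕ, 1 ≤ n →
      (cinv (zn n) - ctil) * zn n / (∫ s in ctil..(cinv (zn n)), z s)
        = 2 * (n : ℝ) / (2 * (n : ℝ) + 1)) ∧
    Filter.Tendsto (fun n : ℕ => 2 * (n : ℝ) / (2 * (n : ℝ) + 1)) Filter.atTop (nhds 1) := by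
  have hD : 0 < A - a := by linarith
  constructor
  · intro n hn
    set m : ℝ := (n : ℝ) with hm
    have hm1 : (1 : ℝ) ≤ m := by rw [hm]; exact_mod_cast hn
    have hm0 : 0 < m + 1 := by linarith
    set K : ℝ := b - B - ctil with hK
    -- the upper endpoint
    have hznval : zn n = m * K / (2 * (m + 1) * (A - a)) := hzn n
    have hcn : cinv (zn n) = b - B - m * K / (m + 1) := by
      rw [hcinv, hznval]
      field_simp
    have hle : ctil ≤ cinv (zn n) := by
      rw [hcn]
      have : m * K / (m + 1) ≤ K := by
        rw [div_le_iff₀ hm0]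
        nlinarith
      linarith [this]
    -- on the interval, z s = (b - B - s) / (2 * (A - a))
    have hcongr : ∫ s in ctil..(cinv (zn n)), z s
        = ∫ s in ctil..(cinv (zn n)), (b - B - s) / (2 * (A - a)) := by
      apply intervalIntegral.integral_congr
      intro s hs
      rw [Set.uIcc_of_le hle] at hs
      have hs2 : s ≤ cinv (zn n) := hs.2
      have hnn : 0 ≤ b - B - s := by
        rw [hcn] at hs2
        have : 0 ≤ m * K / (m + 1) := by positivity
        linarith
      rw [hz s, max_eq_left hnn]
    have hint : ∫ s in ctil..(cinv (zn n)), (b - B - s) / (2 * (A - a))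
        = ((b - B) * (cinv (zn n) - ctil)
            - ((cinv (zn n)) ^ 2 - ctil ^ 2) / 2) / (2 * (A - a)) := by
      rw [intervalIntegral.integral_div]
      congr 1
      rw [intervalIntegral.integral_sub intervalIntegrable_const
        intervalIntegral.intervalIntegrable_id]
      simp [integral_id, mul_comm]
      ring
    rw [hcongr, hint, hcn, hznval]
    have h2m : (2 * m + 1) ≠ 0 := by positivity
    have hm1' : (m + 1) ≠ 0 := ne_of_gt hm0
    have hD' : (A - a) ≠ 0 := ne_of_gt hD
    rw [div_eq_div_iff]
    · field_simp
      ring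
    · -- denominator : the integral value is nonzero
      have : ((b - B) * ((b - B - m * K / (m + 1)) - ctil)
          - ((b - B - m * K / (m + 1)) ^ 2 - ctil ^ 2) / 2) / (2 * (A - a))
          = K ^ 2 * (2 * m + 1) / (4 * (A - a) * (m + 1) ^ 2) := by
        field_simp
        ring
      rw [this]
      positivity
    · positivity
  · have h1 : Filter.Tendsto (fun n : ℕ => 2 * (n : ℝ) + 1) Filter.atTop Filter.atTop := by
      apply Filter.tendsto_atTop_add_const_right
      exact (tendsto_natCast_atTop_atTop).const_mul_atTop (by norm_num : (0:ℝ) < 2)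
    have h2 : Filter.Tendsto (fun n : ℕ => (2 * (n : ℝ) + 1)⁻¹) Filter.atTop (nhds 0) :=
      tendsto_inv_atTop_zero.comp h1
    have h3 : Filter.Tendsto (fun n : ℕ => 1 - (2 * (n : ℝ) + 1)⁻¹) Filter.atTop (nhds 1) := by
      simpa using Filter.Tendsto.sub tendsto_const_nhds h2
    refine h3.congr fun n => ?_
    have hpos' : (0:ℝ) < 2 * (n : ℝ) + 1 := by positivity
    field_simp
    ring
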